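/- Let Cl(p,q,r) be a Clifford algebra with n = p+q+r. For any even m, if X is an odd element (α(X) = −X) such that α(X)·V = V·X for all V in the grade-m subspace, then also α(X)·W = W·X for all W in the grade-(m+1) subspace. -/

import Mathlib

open CliffordAlgebra

noncomputable section

/-- Diagonal weights: `p` entries `+1`, `q` entries `-1`, `r` entries `0`. -/
def cliffSig (p q : ℕ) (i : ℕ) : ℝ := if i < p then 1 else if i < p + q then -1 else 0

/-- The quadratic form of signature `(p, q, r)` on `ℝ^(p+q+r)`. -/
def Qf (p q r : ℕ) : QuadraticForm ℝ (Fin (p + q + r) → ℝ) :=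
  QuadraticMap.weightedSumSquares ℝ (fun i : Fin (p + q + r) => cliffSig p q (i : ℕ))

/-- The `i`-th generator `e_i` of `Cl(p,q,r)`. -/
def gen (p q r : ℕ) (i : Fin (p + q + r)) : CliffordAlgebra (Qf p q r) :=
  ι (Qf p q r) (Pi.single i 1)

/-- The grade-`m` subspace `Cl^m(p,q,r)`: span of products of `m` distinct generators
with increasing indices. -/
def gradeSubspace (p q r m : ℕ) : Submodule ℝ (CliffordAlgebra (Qf p q r)) :=
  Submodule.span ℝ {x | ∃ l : List (Fin (p + q + r)),
    l.Chain' (· < ·) ∧ l.length = m ∧ x = (l.map (gen p q r)).prod}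

/-- `Λ_r`: the subalgebra generated by the `r` null generators. -/
def LambdaR (p q r : ℕ) : Subalgebra ℝ (CliffordAlgebra (Qf p q r)) :=
  Algebra.adjoin ℝ {x | ∃ i : Fin (p + q + r), p + q ≤ (i : ℕ) ∧ x = gen p q r i}

/-- `Λ^d_r`: the degree-`d` component of `Λ_r`. -/
def LambdaDeg (p q r d : ℕ) : Submodule ℝ (CliffordAlgebra (Qf p q r)) :=
  Submodule.span ℝ {x | ∃ l : List (Fin (p + q + r)),
    l.Chain' (· < ·) ∧ l.length = d ∧ (∀ i ∈ l, p + q ≤ (i : ℕ)) ∧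
    x = (l.map (gen p q r)).prod}

/-- The pseudoscalar `e_1 ⋯ e_n`. -/
def pseudoscalar (p q r : ℕ) : CliffordAlgebra (Qf p q r) :=
  ((List.finRange (p + q + r)).map (gen p q r)).prod

/-- Product of the generators over a list of indices (auxiliary). -/
def mon (p q r : ℕ) (v : List (Fin (p+q+r))) : CliffordAlgebra (Qf p q r) :=
  (v.map (gen p q r)).prod

section Aux
variable {p q r : ℕ}

lemma cliffSig_cases (i : ℕ) : cliffSig p q i * cliffSig p q i = 1 ∨ cliffSig p q i = 0 := by
  unfold cliffSig; split_ifs <;> norm_num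

lemma Qf_single (i : Fin (p+q+r)) : Qf p q r (Pi.single i 1) = cliffSig p q (i:ℕ) := by
  unfold Qf
  rw [QuadraticMap.weightedSumSquares_apply, Finset.sum_eq_single i]
  · simp
  · intro k _ hk
    rw [Pi.single_eq_of_ne hk]; ring_nf
  · intro h; exact absurd (Finset.mem_univ i) h

lemma isOrtho_single_single {i j : Fin (p+q+r)} (hij : i ≠ j) :
    (Qf p q r).IsOrtho (Pi.single i 1) (Pi.single j 1) := by
  rw [QuadraticMap.isOrtho_def]
  unfold Qf
  simp only [QuadraticMap.weightedSumSquares_apply, smul_eq_mul]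
  rw [← Finset.sum_add_distrib]
  refine Finset.sum_congr rfl fun k _ => ?_
  rw [Pi.add_apply]
  rcases eq_or_ne k i with rfl | hki
  · rw [Pi.single_eq_same, Pi.single_eq_of_ne hij]; ring
  · rw [Pi.single_eq_of_ne hki]; ring

lemma isOrtho_single_null {i : Fin (p+q+r)} (h0 : cliffSig p q (i:ℕ) = 0)
    (v : Fin (p+q+r) → ℝ) : (Qf p q r).IsOrtho (Pi.single i 1) v := by
  rw [QuadraticMap.isOrtho_def]
  unfold Qf
  simp only [QuadraticMap.weightedSumSquares_apply, smul_eq_mul]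
  rw [← Finset.sum_add_distrib]
  refine Finset.sum_congr rfl fun k _ => ?_
  rw [Pi.add_apply]
  rcases eq_or_ne k i with rfl | hki
  · rw [h0]; ring
  · rw [Pi.single_eq_of_ne hki]; ring

lemma gen_anticomm {i j : Fin (p+q+r)} (hij : i ≠ j) :
    gen p q r i * gen p q r j = -(gen p q r j * gen p q r i) :=
  eq_neg_of_add_eq_zero_left (ι_mul_ι_add_swap_of_isOrtho (isOrtho_single_single hij))

lemma gen_sq (i : Fin (p+q+r)) :
    gen p q r i * gen p q r i = algebraMap ℝ _ (cliffSig p q (i:ℕ)) := by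
  rw [gen, ι_sq_scalar, Qf_single]

lemma involute_gen (i : Fin (p+q+r)) : involute (gen p q r i) = -(gen p q r i) :=
  involute_ι _

lemma null_comm {i : Fin (p+q+r)} (h0 : cliffSig p q (i:ℕ) = 0)
    (Y : CliffordAlgebra (Qf p q r)) : gen p q r i * Y = involute Y * gen p q r i := by
  induction Y using CliffordAlgebra.induction with
  | algebraMap s => rw [AlgHom.commutes]; exact (Algebra.commutes s _).symm
  | ι x =>
      rw [involute_ι]
      have := ι_mul_ι_add_swap_of_isOrtho (isOrtho_single_null h0 x)
      rw [gen]
      linear_combination (norm := noncomm_ring) this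
  | mul a b ha hb => rw [map_mul, ← mul_assoc, ha, mul_assoc, hb, ← mul_assoc]
  | add a b ha hb => rw [map_add, mul_add, add_mul, ha, hb]

lemma mon_nil : mon p q r [] = 1 := rfl

lemma mon_cons (a : Fin (p+q+r)) (t : List (Fin (p+q+r))) :
    mon p q r (a :: t) = gen p q r a * mon p q r t := by
  simp [mon]

lemma gen_comm_mon (i : Fin (p+q+r)) : ∀ v : List (Fin (p+q+r)),
    gen p q r i * mon p q r v = mon p q r v * gen p q r i ∨
    gen p q r i * mon p q r v = -(mon p q r v * gen p q r i)
  | [] => by left; rw [mon_nil, one_mul, mul_one]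
  | a :: t => by
    rcases eq_or_ne a i with rfl | hai
    · rcases gen_comm_mon a t with h | h
      · left
        rw [mon_cons]
        linear_combination (norm := noncomm_ring) gen p q r a * h
      · right
        rw [mon_cons]
        linear_combination (norm := noncomm_ring) gen p q r a * h
    · have hia : gen p q r i * gen p q r a = -(gen p q r a * gen p q r i) :=
        gen_anticomm (Ne.symm hai)
      rcases gen_comm_mon i t with h | h
      · right
        rw [mon_cons]
        linear_combination (norm := noncomm_ring) hia * mon p q r t - gen p q r a * h
      · left
        rw [mon_cons]
        linear_combination (norm := noncomm_ring) hia * mon p q r t - gen p q r a * h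

lemma mon_extract : ∀ (v : List (Fin (p+q+r))) (j : Fin (p+q+r)), j ∈ v →
    mon p q r v = gen p q r j * mon p q r (v.erase j) ∨
    mon p q r v = -(gen p q r j * mon p q r (v.erase j))
  | [], j, h => absurd h List.not_mem_nil
  | a :: t, j, h => by
    rcases eq_or_ne a j with rfl | haj
    · left; rw [List.erase_cons_head, mon_cons]
    · have hjt : j ∈ t := (List.mem_cons.mp h).resolve_left (fun h' => haj h'.symm)
      rw [List.erase_cons_tail (by simpa using haj)]
      have hja : gen p q r j * gen p q r a = -(gen p q r a * gen p q r j) :=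
        gen_anticomm (fun h' => haj h'.symm)
      rcases mon_extract t j hjt with h' | h'
      · right
        rw [mon_cons, h', mon_cons]
        linear_combination (norm := noncomm_ring) hja * mon p q r (t.erase j)
      · left
        rw [mon_cons, h', mon_cons]
        linear_combination (norm := noncomm_ring) -(hja * mon p q r (t.erase j))

lemma mon_mul_smul (X : CliffordAlgebra (Qf p q r)) (s : Fin (p+q+r) → ℝ) :
    ∀ v : List (Fin (p+q+r)), (∀ i ∈ v, gen p q r i * X = s i • (X * gen p q r i)) →
    mon p q r v * X = ((v.map s).prod) • (X * mon p q r v)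
  | [], _ => by simp [mon_nil]
  | a :: t, hv => by
    have ht := mon_mul_smul X s t (fun i hi => hv i (List.mem_cons_of_mem a hi))
    have ha := hv a List.mem_cons_self
    rw [mon_cons, mul_assoc, ht, mul_smul_comm, ← mul_assoc, ha, smul_mul_assoc,
      smul_smul, List.map_cons, List.prod_cons, mul_assoc, mul_comm (s a)]

lemma prod_pm : ∀ v : List ℝ, (∀ x ∈ v, x = 1 ∨ x = -1) → v.prod = 1 ∨ v.prod = -1
  | [], _ => by left; simp
  | a :: t, hv => by
    have ht := prod_pm t (fun x hx => hv x (List.mem_cons_of_mem a hx))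
    have ha := hv a List.mem_cons_self
    rw [List.prod_cons]
    rcases ha with rfl | rfl <;> rcases ht with h | h <;> rw [h] <;> norm_num

/-- conjugated element twisted-anticommutes with monomials. -/
lemma sandwich_anti (G M X : CliffordAlgebra (Qf p q r))
    (h : G * M = M * G ∨ G * M = -(M * G)) (hXM : X * M = -(M * X)) :
    (G * X * G) * M = -(M * (G * X * G)) := by
  rcases h with h | h
  · linear_combination (norm := noncomm_ring) G * X * h + G * hXM * G - h * (X * G)
  · linear_combination (norm := noncomm_ring) G * X * h - G * hXM * G + h * (X * G)

lemma key (m : ℕ) (hm : Even m) (l : List (Fin (p+q+r)))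
    (hc : l.Chain' (· < ·)) (hl : l.length = m+1) :
    ∀ (bs : List (Fin (p+q+r))) (X : CliffordAlgebra (Qf p q r)),
      involute X = -X →
      (∀ v : List (Fin (p+q+r)), v.Chain' (· < ·) → v.length = m →
        X * mon p q r v = -(mon p q r v * X)) →
      (∀ i ∈ l, i ∉ bs →
        gen p q r i * X = X * gen p q r i ∨ gen p q r i * X = -(X * gen p q r i)) →
      X * mon p q r l + mon p q r l * X = 0 := by
  intro bs
  induction bs with
  | nil =>
    intro X hodd hX hsgn
    classical
    set s : Fin (p+q+r) → ℝ :=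
      fun i => if gen p q r i * X = X * gen p q r i then 1 else -1 with hs
    have hsmem : ∀ i ∈ l, gen p q r i * X = s i • (X * gen p q r i) := by
      intro i hi
      by_cases hc' : gen p q r i * X = X * gen p q r i
      · have h1 : s i = 1 := if_pos hc'
        rw [h1, one_smul]; exact hc'
      · have h1 : s i = -1 := if_neg hc'
        rw [h1, neg_one_smul]
        exact (hsgn i hi List.not_mem_nil).resolve_left hc'
    have hpm : (l.map s).prod = 1 ∨ (l.map s).prod = -1 := by
      refine prod_pm _ ?_
      intro x hx
      obtain ⟨i, _, rfl⟩ := List.mem_map.mp hx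
      by_cases hc' : gen p q r i * X = X * gen p q r i
      · left; exact if_pos hc'
      · right; exact if_neg hc'
    have hml := mon_mul_smul X s l hsmem
    rcases hpm with h1 | h1
    · -- product 1 : find j with s j = 1
      have hj : ∃ j ∈ l, s j = 1 := by
        by_contra hno
        push_neg at hno
        have hall : ∀ x ∈ l.map s, x = -1 := by
          intro x hx
          obtain ⟨i, hi, rfl⟩ := List.mem_map.mp hx
          by_cases h' : gen p q r i * X = X * gen p q r i
          · exact absurd (if_pos h') (hno i hi)
          · exact if_neg h'
        have hp := List.prod_eq_pow_card (l.map s) (-1) hall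
        rw [List.length_map, hl, pow_succ, hm.neg_one_pow, one_mul, h1] at hp
        norm_num at hp
      obtain ⟨j, hjl, hsj⟩ := hj
      have hcomm : gen p q r j * X = X * gen p q r j := by
        by_contra hc'
        have : s j = -1 := if_neg hc'
        rw [this] at hsj; norm_num at hsj
      have hVs : (l.erase j).Chain' (· < ·) := hc.sublist List.erase_sublist
      have hVl : (l.erase j).length = m := by
        rw [List.length_erase_of_mem hjl, hl]; omega
      have hXV : X * mon p q r (l.erase j) = -(mon p q r (l.erase j) * X) := hX _ hVs hVl
      have hprodV : (((l.erase j).map s).prod) = 1 := by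
        have hpe := List.prod_map_erase s hjl
        rw [hsj, one_mul] at hpe
        rw [hpe, h1]
      have hVX : mon p q r (l.erase j) * X = X * mon p q r (l.erase j) := by
        rw [mon_mul_smul X s _ (fun i hi => hsmem i (List.mem_of_mem_erase hi)), hprodV,
          one_smul]
      have hzero : X * mon p q r (l.erase j) = 0 := by
        have h2 : X * mon p q r (l.erase j) = -(X * mon p q r (l.erase j)) := by
          calc X * mon p q r (l.erase j) = -(mon p q r (l.erase j) * X) := hXV
            _ = -(X * mon p q r (l.erase j)) := by rw [hVX]
        have h3 : (2:ℝ) • (X * mon p q r (l.erase j)) = 0 := by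
          rw [two_smul]
          nth_rewrite 2 [h2]
          exact add_neg_cancel _
        exact (smul_eq_zero.mp h3).resolve_left (by norm_num)
      have hzero' : mon p q r (l.erase j) * X = 0 := by rw [hVX, hzero]
      have e1 : X * (gen p q r j * mon p q r (l.erase j)) = 0 := by
        rw [← mul_assoc, ← hcomm, mul_assoc, hzero, mul_zero]
      have e2 : (gen p q r j * mon p q r (l.erase j)) * X = 0 := by
        rw [mul_assoc, hzero', mul_zero]
      rcases mon_extract l j hjl with he | he
      · rw [he, e1, e2, add_zero]
      · rw [he, mul_neg, neg_mul, e1, e2, neg_zero, add_zero]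

    · rw [hml, h1, neg_one_smul, add_neg_cancel]
  | cons b t ih =>
    intro X hodd hX hsgn
    rcases cliffSig_cases (b:ℕ) with hb2 | hb0
    · -- invertible square case : split X
      set e := gen p q r b with he
      set c := cliffSig p q (b:ℕ) with hcdef
      set Y : CliffordAlgebra (Qf p q r) := (2⁻¹:ℝ) • (c • (e * X * e) + X) with hY
      set Z : CliffordAlgebra (Qf p q r) := X - Y with hZ
      have hEXE_left : e * (e * X * e) = c • (X * e) := by
        rw [← mul_assoc, ← mul_assoc, gen_sq, ← hcdef, Algebra.smul_def, mul_assoc]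
      have hEXE_right : (e * X * e) * e = c • (e * X) := by
        rw [mul_assoc, mul_assoc, gen_sq, ← hcdef, ← Algebra.commutes c (X),
          ← Algebra.smul_def, mul_smul_comm]
      have heY : e * Y = (2⁻¹:ℝ) • (X * e + e * X) := by
        rw [hY, mul_smul_comm, mul_add, mul_smul_comm, hEXE_left, smul_smul, hb2, one_smul]
      have hYe : Y * e = (2⁻¹:ℝ) • (X * e + e * X) := by
        rw [hY, smul_mul_assoc, add_mul, smul_mul_assoc, hEXE_right, smul_smul, hb2, one_smul]
        module
      have hYodd : involute Y = -Y := by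
        rw [hY, map_smul, map_add, map_smul, map_mul, map_mul, hodd, involute_gen, ← he]
        simp only [neg_mul, mul_neg, neg_neg]
        module
      have hYX : ∀ v : List (Fin (p+q+r)), v.Chain' (· < ·) → v.length = m →
          Y * mon p q r v = -(mon p q r v * Y) := by
        intro v hcv hlv
        have hsand := sandwich_anti e (mon p q r v) X (gen_comm_mon b v) (hX v hcv hlv)
        have lhs1 : Y * mon p q r v =
            (2⁻¹:ℝ) • (c • ((e * X * e) * mon p q r v) + X * mon p q r v) := by
          rw [hY, smul_mul_assoc, add_mul, smul_mul_assoc]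
        have rhs1 : mon p q r v * Y =
            (2⁻¹:ℝ) • (c • (mon p q r v * (e * X * e)) + mon p q r v * X) := by
          rw [hY, mul_smul_comm, mul_add, mul_smul_comm]
        rw [lhs1, rhs1, hsand, hX v hcv hlv]
        module
      have hsgnYZ : ∀ i ∈ l, i ∉ t →
          ((gen p q r i * Y = Y * gen p q r i ∨ gen p q r i * Y = -(Y * gen p q r i)) ∧
           (gen p q r i * Z = Z * gen p q r i ∨ gen p q r i * Z = -(Z * gen p q r i))) := by
        intro i hi hit
        by_cases hib : i = b
        · subst hib
          constructor
          · left; rw [← he, heY, hYe]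
          · right
            rw [hZ, mul_sub, sub_mul, ← he, heY, hYe]
            module
        · have hine : gen p q r i * e = -(e * gen p q r i) := by
            rw [he]; exact gen_anticomm hib
          rcases hsgn i hi (by simp [hib, hit]) with h | h
          · have hsw : gen p q r i * (e * X * e) = (e * X * e) * gen p q r i := by
              linear_combination (norm := noncomm_ring)
                hine * (X * e) - e * h * e - (e * X) * hine
            have hYi : gen p q r i * Y = Y * gen p q r i := by
              rw [hY, mul_smul_comm, smul_mul_assoc, mul_add, add_mul, mul_smul_comm,
                smul_mul_assoc, hsw, h]
            refine ⟨Or.inl hYi, Or.inl ?_⟩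
            rw [hZ, mul_sub, sub_mul, h, hYi]
          · have hsw : gen p q r i * (e * X * e) = -((e * X * e) * gen p q r i) := by
              linear_combination (norm := noncomm_ring)
                hine * (X * e) - e * h * e + (e * X) * hine
            have hYi : gen p q r i * Y = -(Y * gen p q r i) := by
              rw [hY, mul_smul_comm, smul_mul_assoc, mul_add, add_mul, mul_smul_comm,
                smul_mul_assoc, hsw, h]
              module
            refine ⟨Or.inr hYi, Or.inr ?_⟩
            rw [hZ, mul_sub, sub_mul, h, hYi]
            module
      have hZodd : involute Z = -Z := by
        rw [hZ, map_sub, hodd, hYodd]; module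
      have hZX : ∀ v : List (Fin (p+q+r)), v.Chain' (· < ·) → v.length = m →
          Z * mon p q r v = -(mon p q r v * Z) := by
        intro v hcv hlv
        rw [hZ, sub_mul, mul_sub, hX v hcv hlv, hYX v hcv hlv]
        module
      have hYk := ih Y hYodd hYX (fun i hi hit => (hsgnYZ i hi hit).1)
      have hZk := ih Z hZodd hZX (fun i hi hit => (hsgnYZ i hi hit).2)
      have hXYZ : X = Y + Z := by rw [hZ]; abel
      rw [hXYZ, add_mul, mul_add]
      calc Y * mon p q r l + Z * mon p q r l + (mon p q r l * Y + mon p q r l * Z)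
          = (Y * mon p q r l + mon p q r l * Y) + (Z * mon p q r l + mon p q r l * Z) := by
            abel
        _ = 0 := by rw [hYk, hZk, add_zero]
    · -- null case
      refine ih X hodd hX ?_
      intro i hi hit
      by_cases hib : i = b
      · subst hib
        right
        rw [null_comm hb0 X, hodd, neg_mul]
      · exact hsgn i hi (by simp [hib, hit])

end Aux

/-- For even `m`, an odd element of the twisted centralizer of the grade-`m` subspace lies
in the twisted centralizer of the grade-`(m+1)` subspace. -/
theorem stmt7 (p q r m : ℕ) (hm : Even m) (X : CliffordAlgebra (Qf p q r))
    (hodd : involute X = -X)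
    (hX : ∀ V ∈ gradeSubspace p q r m, involute X * V = V * X) :
    ∀ W ∈ gradeSubspace p q r (m + 1), involute X * W = W * X := by
  have hX' : ∀ v : List (Fin (p+q+r)), v.Chain' (· < ·) → v.length = m →
      X * mon p q r v = -(mon p q r v * X) := by
    intro v hcv hlv
    have h := hX (mon p q r v) (Submodule.subset_span ⟨v, hcv, hlv, rfl⟩)
    rw [hodd, neg_mul] at h
    exact neg_eq_iff_eq_neg.mp h
  intro W hW
  rw [hodd]
  refine Submodule.span_induction ?_ ?_ ?_ ?_ hW
  · rintro x ⟨v, hcv, hlv, rfl⟩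
    have hk := key m hm v hcv hlv v X hodd hX' (fun i hi hni => absurd hi hni)
    have : -(X * mon p q r v) = mon p q r v * X := neg_eq_of_add_eq_zero_right hk
    show -X * mon p q r v = mon p q r v * X
    rw [neg_mul]; exact this
  · simp
  · intro x y _ _ hx hy
    rw [mul_add, add_mul, hx, hy]
  · intro a x _ hx
    rw [mul_smul_comm, smul_mul_assoc, hx]
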